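/- Let M be a finitely generated R-module. Then M satisfies the finite coprime condition if and only if every maximal submodule of M is strongly irreducible. -/
import Mathlib

/-- For a finitely generated module, the finite coprime condition holds
iff every maximal submodule is strongly irreducible. -/
theorem finite_coprime_iff_maximal_strongly_irreducible
    {R M : Type*} [CommRing R] [AddCommGroup M] [Module R M] [Nontrivial M]
    [Module.Finite R M] :
    (∀ N K₁ K₂ : Submodule R M, N ⊔ K₁ = ⊤ → N ⊔ K₂ = ⊤ → N ⊔ (K₁ ⊓ K₂) = ⊤) ↔
    (∀ P : Submodule R M, IsCoatom P → ∀ K L : Submodule R M, K ⊓ L ≤ P → K ≤ P ∨ L ≤ P) := by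
  constructor
  · intro h P hP K L hKL
    by_contra hc
    push_neg at hc
    have h1 : P ⊔ K = ⊤ := hP.2 _ (lt_of_le_of_ne le_sup_left (by
      intro he; exact hc.1 (he ▸ le_sup_right)))
    have h2 : P ⊔ L = ⊤ := hP.2 _ (lt_of_le_of_ne le_sup_left (by
      intro he; exact hc.2 (he ▸ le_sup_right)))
    have := h P K L h1 h2
    rw [sup_eq_left.mpr hKL] at this
    exact hP.1 this
  · intro h N K₁ K₂ h1 h2
    by_contra hc
    haveI : IsCoatomic (Submodule R M) :=
      CompleteLattice.coatomic_of_top_compact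
        ((Submodule.fg_iff_compact _).mp Module.Finite.fg_top)
    obtain ⟨P, hP, hle⟩ := (eq_top_or_exists_le_coatom (N ⊔ (K₁ ⊓ K₂))).resolve_left hc
    rcases h P hP K₁ K₂ (le_trans (le_sup_right.trans hle) le_rfl) with hK | hK
    · exact hP.1 (top_le_iff.mp (h1 ▸ sup_le ((le_sup_left.trans hle)) hK))
    · exact hP.1 (top_le_iff.mp (h2 ▸ sup_le ((le_sup_left.trans hle)) hK))
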